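/- Tian–Pearl upper bound on PNS: for every P as in the context, P(Y₁ = true ∧ Y₀ = false) ≤ min {P(Y₁ = true), P(Y₀ = false), P(X = true ∧ Y = true) + P(X = false ∧ Y = false), P(Y₁ = true) − P(Y₀ = true) + P(X = true ∧ Y = false) + P(X = false ∧ Y = true)}. -/
import Mathlib

/-- The probability of an event `E` under a mass function `P` on a finite type. -/
noncomputable def prob {Ω : Type*} [Fintype Ω] (P : Ω → ℝ) (E : Set Ω) : ℝ :=
  ∑ ω, E.indicator P ω

/-- The binary counterfactual sample space: coordinates `(Y₀, Y₁, X)`, i.e. the potential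
outcomes `Y₀ = Y_{x'}` and `Y₁ = Y_x` and the treatment `X`. -/
abbrev BOmega : Type := Bool × Bool × Bool

/-- The observed outcome defined by consistency: `Y := if X then Y₁ else Y₀`. -/
def Yobs (ω : BOmega) : Bool := if ω.2.2 then ω.2.1 else ω.1

/-- Tian–Pearl upper bound on PNS: `PNS ≤ min {P(y_x), P(y'_{x'}),
P(x,y) + P(x',y'), P(y_x) − P(y_{x'}) + P(x,y') + P(x',y)}`. -/
theorem tian_pearl_pns_upper_bound
    (P : BOmega → ℝ) (hP0 : ∀ ω, 0 ≤ P ω) (hP1 : ∑ ω, P ω = 1) :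
    prob P {ω | ω.2.1 = true ∧ ω.1 = false} ≤
      min (prob P {ω | ω.2.1 = true}) (min
        (prob P {ω | ω.1 = false})
        (min
          (prob P {ω | ω.2.2 = true ∧ Yobs ω = true} +
            prob P {ω | ω.2.2 = false ∧ Yobs ω = false})
          (prob P {ω | ω.2.1 = true} - prob P {ω | ω.1 = true} +
            prob P {ω | ω.2.2 = true ∧ Yobs ω = false} +
            prob P {ω | ω.2.2 = false ∧ Yobs ω = true}))) := by
  have h := fun a b c => hP0 (a, b, c)
  simp only [prob, Set.indicator, Yobs, Fintype.sum_prod_type, Fintype.sum_bool,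
    Set.mem_setOf_eq] at *
  norm_num
  refine ⟨?_, ?_, ?_, ?_⟩ <;>
    linarith [h true true true, h true true false, h true false true, h true false false,
      h false true true, h false true false, h false false true, h false false false]
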